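/- arXiv:2008.08541 — 2 statements merged into one kernel-verified Lean document; each statement's English description precedes it below -/
import Mathlib

section
/- Let G be a finite simple graph and u a half-activated vertex (some null pattern of G activates u). Then ν(G−u) = ν(G) − 1. -/
open scoped Classical

/-- Closed adjacency matrix of a simple graph over GF(2): entry (i,j) is 1 iff i = j or i ~ j. -/
noncomputable def closedAdj {V : Type*} [Fintype V] (G : SimpleGraph V) :
    Matrix V V (ZMod 2) :=
  Matrix.of fun i j => if i = j ∨ G.Adj i j then 1 else 0

/-- Nullity ν(G): dimension over GF(2) of the kernel of the closed adjacency matrix. -/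
noncomputable def nu {V : Type*} [Fintype V] (G : SimpleGraph V) : ℕ :=
  Module.finrank (ZMod 2) (LinearMap.ker (closedAdj G).mulVecLin)

open Matrix

lemma sum_split {V : Type*} [Fintype V] (u : V) (f : V → ZMod 2) :
    ∑ j : V, f j = f u + ∑ j : ({u}ᶜ : Set V), f j := by
  rw [Fintype.sum_eq_add_sum_compl u f]
  congr 1
  exact (Finset.sum_subtype ({u}ᶜ : Finset V)
    (fun x => by simp [Set.mem_compl_singleton_iff]) f)

lemma closedAdj_symm {V : Type*} [Fintype V] (G : SimpleGraph V) (i j : V) :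
    closedAdj G i j = closedAdj G j i := by
  simp only [closedAdj, Matrix.of_apply]
  exact if_congr (by rw [eq_comm, G.adj_comm]) rfl rfl

lemma closedAdj_induce {V : Type*} [Fintype V] (G : SimpleGraph V) (u : V)
    (i j : ({u}ᶜ : Set V)) :
    closedAdj (G.induce ({u}ᶜ : Set V)) i j = closedAdj G i j := by
  simp only [closedAdj, Matrix.of_apply, SimpleGraph.comap_adj, Function.Embedding.coe_subtype,
    Subtype.ext_iff]


set_option maxHeartbeats 1000000 in
theorem nu_delete_half_activated {V : Type*} [Fintype V] (G : SimpleGraph V) (u : V)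
    (hu : ∃ l : V → ZMod 2, (closedAdj G).mulVec l = 0 ∧ l u = 1) :
    nu (G.induce ({u}ᶜ : Set V)) = nu G - 1 := by
  obtain ⟨l, hl, hlu⟩ := hu
  set N := closedAdj G with hN
  set M := closedAdj (G.induce ({u}ᶜ : Set V)) with hM
  have hNsymm : Matrix.transpose N = N := by
    ext i j; exact closedAdj_symm G j i
  have huW : u ∉ ({u}ᶜ : Set V) := by simp
  -- extension by zero
  let ext : (({u}ᶜ : Set V) → ZMod 2) → (V → ZMod 2) := fun y v =>
    if h : v ∈ ({u}ᶜ : Set V) then y ⟨v, h⟩ else 0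
  have ext_u : ∀ y, ext y u = 0 := fun y => dif_neg huW
  have ext_coe : ∀ y (j : ({u}ᶜ : Set V)), ext y j = y j := by
    intro y j
    simp only [ext]
    rw [dif_pos j.2]
  -- step (b): for i ≠ u, (N *ᵥ ext y) i = (M *ᵥ y) ⟨i⟩
  have keyb : ∀ (y : ({u}ᶜ : Set V) → ZMod 2) (i : ({u}ᶜ : Set V)),
      N.mulVec (ext y) i = M.mulVec y i := by
    intro y i
    simp only [Matrix.mulVec, dotProduct]
    rw [sum_split u (fun j => N i j * ext y j)]
    rw [ext_u, mul_zero, zero_add]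
    refine Finset.sum_congr rfl fun j _ => ?_
    rw [ext_coe, hM, closedAdj_induce, ← hN]
  -- given y in ker M, the extension is in ker N
  have keyker : ∀ y : (({u}ᶜ : Set V) → ZMod 2), M.mulVec y = 0 →
      N.mulVec (ext y) = 0 := by
    intro y hy
    have hb : ∀ i : ({u}ᶜ : Set V), N.mulVec (ext y) i = 0 := by
      intro i; rw [keyb y i, hy]; rfl
    have hdot : l ⬝ᵥ N.mulVec (ext y) = 0 := by
      rw [Matrix.dotProduct_mulVec, ← hNsymm, Matrix.vecMul_transpose, hl,
        zero_dotProduct]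
    have hexp : l ⬝ᵥ N.mulVec (ext y) = N.mulVec (ext y) u := by
      simp only [dotProduct]
      rw [sum_split u (fun i => l i * N.mulVec (ext y) i), hlu, one_mul]
      rw [Finset.sum_eq_zero fun i _ => by rw [hb i, mul_zero]]
      ring
    have hu0 : N.mulVec (ext y) u = 0 := by rw [← hexp, hdot]
    funext i
    by_cases hi : i = u
    · rw [hi]; exact hu0
    · exact hb ⟨i, hi⟩
  -- restriction of a kernel vector vanishing at u is in ker M
  have keyres : ∀ x : V → ZMod 2, N.mulVec x = 0 → x u = 0 →
      M.mulVec (fun w : ({u}ᶜ : Set V) => x w) = 0 := by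
    intro x hx hxu
    funext i
    have : N.mulVec x i = 0 := by rw [hx]; rfl
    simp only [Matrix.mulVec, dotProduct, Pi.zero_apply] at this ⊢
    rw [sum_split u (fun j => N (i : V) j * x j), hxu, mul_zero, zero_add] at this
    rw [← this]
    refine Finset.sum_congr rfl fun j _ => ?_
    rw [hM, closedAdj_induce, ← hN]
  -- the evaluation functional on ker N
  let φ : (LinearMap.ker N.mulVecLin) →ₗ[ZMod 2] (ZMod 2) :=
    (LinearMap.proj u).comp (LinearMap.ker N.mulVecLin).subtype
  have hφ : ∀ z : LinearMap.ker N.mulVecLin, φ z = (z : V → ZMod 2) u := fun z => rfl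
  -- linear equivalence between ker M and ker φ
  have ext_zero : ext 0 = 0 := by
    funext v
    simp only [ext]
    split_ifs <;> rfl
  have extlin : ∀ (a b : (({u}ᶜ : Set V) → ZMod 2)) (c : ZMod 2),
      ext (a + c • b) = ext a + c • ext b := by
    intro a b c
    funext v
    simp only [ext, Pi.add_apply, Pi.smul_apply]
    split_ifs <;> simp
  let e : (LinearMap.ker M.mulVecLin) ≃ₗ[ZMod 2] (LinearMap.ker φ) :=
  { toFun := fun y => ⟨⟨ext y.1, by
      rw [LinearMap.mem_ker, Matrix.mulVecLin_apply]
      exact keyker y.1 (by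
        have := y.2
        rwa [LinearMap.mem_ker, Matrix.mulVecLin_apply] at this)⟩, by
      rw [LinearMap.mem_ker]
      exact ext_u y.1⟩
    map_add' := by
      intro a b
      apply Subtype.ext; apply Subtype.ext
      have h := extlin a.1 b.1 1
      rw [one_smul, one_smul] at h
      exact h
    map_smul' := by
      intro c a
      apply Subtype.ext; apply Subtype.ext
      have h := extlin 0 a.1 c
      rw [zero_add, ext_zero, zero_add] at h
      exact h
    invFun := fun z => ⟨fun w => (z : V → ZMod 2) w, by
      rw [LinearMap.mem_ker, Matrix.mulVecLin_apply]
      exact keyres _ (by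
        have := (z : LinearMap.ker N.mulVecLin).2
        rwa [LinearMap.mem_ker, Matrix.mulVecLin_apply] at this) z.2⟩
    left_inv := by
      intro y
      apply Subtype.ext
      funext w
      exact ext_coe y.1 w
    right_inv := by
      intro z
      apply Subtype.ext; apply Subtype.ext
      funext v
      by_cases hv : v ∈ ({u}ᶜ : Set V)
      · simp only [ext]; rw [dif_pos hv]
      · have hv' : v = u := by simpa using hv
        simp only [ext]
        rw [dif_neg hv, hv']
        exact (z.2).symm }
  -- range of φ is everything
  have hlmem : l ∈ LinearMap.ker N.mulVecLin := by
    rw [LinearMap.mem_ker, Matrix.mulVecLin_apply]; exact hl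
  have hrange : LinearMap.range φ = ⊤ := by
    rw [LinearMap.range_eq_top]
    intro c
    refine ⟨c • ⟨l, hlmem⟩, ?_⟩
    rw [φ.map_smul, hφ]
    simp [hlu]
  have hrank := LinearMap.finrank_range_add_finrank_ker φ
  rw [hrange] at hrank
  rw [finrank_top, Module.finrank_self] at hrank
  have hnu : nu G = 1 + Module.finrank (ZMod 2) (LinearMap.ker φ) := by
    rw [nu, ← hrank]
  have hnuM : nu (G.induce ({u}ᶜ : Set V)) = Module.finrank (ZMod 2) (LinearMap.ker φ) := by
    rw [nu, ← hM]
    exact e.finrank_eq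
  omega
end

section
/- Let G be a finite simple graph on n vertices. Then there exists an ordering v_1, …, v_n of the vertices such that, setting G_0 = G and G_k = G_{k−1} − v_k, one has ν(G_k) = ν(G) − k for all k < ν(G), and ν(G_k) = 0 for all k ≥ ν(G) (with ν of the empty graph defined to be 0). -/
open scoped Classical

open Matrix LinearMap

namespace NuAux

abbrev F2 := ZMod 2

lemma two_eq_zero (a : F2) : a + a = 0 := by revert a; decide
lemma ne_zero_eq_one {a : F2} (h : a ≠ 0) : a = 1 := by revert a h; decide
lemma mul_self_eq (a : F2) : a * a = a := by revert a; decide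

variable {V : Type*} [Fintype V]

noncomputable def nuM (M : Matrix V V F2) : ℕ :=
  Module.finrank F2 (LinearMap.ker M.mulVecLin)

lemma sum_split (v : V) (f : V → F2) :
    ∑ w, f w = f v + ∑ w : {w : V // w ≠ v}, f w.val := by
  classical
  rw [← Finset.sum_erase_add _ _ (Finset.mem_univ v), add_comm]
  congr 1
  exact (Finset.sum_subtype (p := fun w => w ≠ v) (Finset.univ.erase v)
    (fun x => by simp [Finset.mem_erase]) f)

/-- quadratic form over GF(2) for a symmetric matrix -/
lemma quadform (B : Matrix V V F2) (hB : ∀ i j, B i j = B j i) (x : V → F2) :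
    x ⬝ᵥ B.mulVec x = ∑ i, B i i * x i := by
  classical
  have h0 : x ⬝ᵥ B.mulVec x
      = ∑ p ∈ Finset.univ ×ˢ Finset.univ, x p.1 * B p.1 p.2 * x p.2 := by
    rw [Finset.sum_product]
    simp only [dotProduct, Matrix.mulVec, dotProduct, Finset.mul_sum]
    exact Finset.sum_congr rfl fun i _ => Finset.sum_congr rfl fun j _ => by ring
  rw [h0, ← Finset.sum_filter_add_sum_filter_not (Finset.univ ×ˢ Finset.univ)
    (fun p : V × V => p.1 = p.2)]
  have h1 : ∑ p ∈ (Finset.univ ×ˢ Finset.univ).filter (fun p : V × V => p.1 = p.2),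
      x p.1 * B p.1 p.2 * x p.2 = ∑ i, B i i * x i := by
    refine Finset.sum_nbij' (fun p => p.1) (fun i => (i, i)) ?_ ?_ ?_ ?_ ?_
    · intro a ha; simp
    · intro a ha; simp
    · intro a ha
      simp only [Finset.mem_filter] at ha
      simp [Prod.ext_iff, ha.2]
    · intro a ha; rfl
    · intro a ha
      simp only [Finset.mem_filter] at ha
      rw [← ha.2]
      rw [mul_comm (x a.1) (B a.1 a.1), mul_assoc, mul_self_eq]
  have h2 : ∑ p ∈ (Finset.univ ×ˢ Finset.univ).filter (fun p : V × V => ¬ p.1 = p.2),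
      x p.1 * B p.1 p.2 * x p.2 = 0 := by
    refine Finset.sum_involution (fun p _ => p.swap) ?_ ?_ ?_ ?_
    · intro a ha
      have : x a.2 * B a.2 a.1 * x a.1 = x a.1 * B a.1 a.2 * x a.2 := by
        rw [hB a.2 a.1]; ring
      simp only [Prod.swap, this]
      exact two_eq_zero _
    · intro a ha _
      simp only [Finset.mem_filter] at ha
      simp only [Prod.swap, ne_eq, Prod.ext_iff, not_and]
      intro h _; exact ha.2 h.symm
    · intro a ha
      simp only [Finset.mem_filter, Finset.mem_product, Finset.mem_univ, true_and,
        and_true, Prod.fst_swap, Prod.snd_swap] at ha ⊢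
      exact fun h => ha h.symm
    · intro a ha; rfl
  rw [h1, h2, add_zero]

lemma nuM_reindex {W : Type*} [Fintype W] (e : W ≃ V) (M : Matrix V V F2) :
    nuM (M.submatrix e e) = nuM M := by
  classical
  rw [nuM, nuM, Matrix.mulVecLin_submatrix (⇑e) e M]
  rw [LinearMap.ker_comp_of_ker_eq_bot _
    (LinearMap.ker_eq_bot.mpr (LinearMap.funLeft_injective_of_surjective F2 F2 _ e.surjective))]
  have hfl : funLeft F2 F2 ⇑e.symm
      = (LinearEquiv.funCongrLeft F2 F2 e.symm : (W → F2) →ₗ[F2] (V → F2)) := rfl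
  rw [LinearMap.ker_comp, hfl, Submodule.comap_equiv_eq_map_symm]
  exact LinearEquiv.finrank_map_eq _ _

noncomputable def ext0 (v : V) (z : {w : V // w ≠ v} → F2) : V → F2 :=
  fun w => if h : w = v then 0 else z ⟨w, h⟩

lemma ext0_apply_ne (v : V) (z : {w : V // w ≠ v} → F2) {w : V} (h : w ≠ v) :
    ext0 v z w = z ⟨w, h⟩ := dif_neg h

lemma ext0_apply_self (v : V) (z : {w : V // w ≠ v} → F2) : ext0 v z v = 0 := dif_pos rfl

lemma restrict_ker (M : Matrix V V F2) (v : V) (y : V → F2)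
    (hy : M.mulVec y = 0) (hyv : y v = 0) :
    (M.submatrix (Subtype.val : {w : V // w ≠ v} → V) Subtype.val).mulVec
      (fun w : {w : V // w ≠ v} => y w.val) = 0 := by
  funext u
  simp only [Pi.zero_apply]
  have h1 : (M.submatrix (Subtype.val : {w : V // w ≠ v} → V) Subtype.val).mulVec
      (fun w : {w : V // w ≠ v} => y w.val) u = ∑ w : {w : V // w ≠ v}, M u.val w.val * y w.val :=
    rfl
  have h3 : M.mulVec y u.val = ∑ w, M u.val w * y w := rfl
  have h4 : ∑ w, M u.val w * y w = 0 := by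
    rw [← h3, hy, Pi.zero_apply]
  rw [sum_split v (fun w => M u.val w * y w), hyv, mul_zero, zero_add] at h4
  rw [h1, h4]

lemma mulVec_ext0_ne (M : Matrix V V F2) (v : V) (z : {w : V // w ≠ v} → F2)
    (hz : (M.submatrix (Subtype.val : {w : V // w ≠ v} → V) Subtype.val).mulVec z = 0)
    {u : V} (hu : u ≠ v) : M.mulVec (ext0 v z) u = 0 := by
  have h1 : M.mulVec (ext0 v z) u = ∑ w, M u w * ext0 v z w := rfl
  rw [h1, sum_split v (fun w => M u w * ext0 v z w), ext0_apply_self, mul_zero, zero_add]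
  have h2 := congrFun hz ⟨u, hu⟩
  rw [Pi.zero_apply] at h2
  have h3 : (M.submatrix (Subtype.val : {w : V // w ≠ v} → V) Subtype.val).mulVec z ⟨u, hu⟩
      = ∑ w : {w : V // w ≠ v}, M u w.val * z w := rfl
  rw [h3] at h2
  rw [← h2]
  exact Finset.sum_congr rfl fun w _ => by rw [ext0_apply_ne v z w.prop]

lemma mulVec_ext0_self (M : Matrix V V F2) (hsym : Mᵀ = M) (v : V)
    (z : {w : V // w ≠ v} → F2)
    (hz : (M.submatrix (Subtype.val : {w : V // w ≠ v} → V) Subtype.val).mulVec z = 0)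
    (x : V → F2) (hx : M.mulVec x = 0) (hxv : x v = 1) :
    M.mulVec (ext0 v z) v = 0 := by
  have hdot : x ⬝ᵥ M.mulVec (ext0 v z) = 0 := by
    rw [Matrix.dotProduct_mulVec, ← Matrix.mulVec_transpose, hsym, hx, zero_dotProduct]
  have h1 : x ⬝ᵥ M.mulVec (ext0 v z) = ∑ u, x u * M.mulVec (ext0 v z) u := rfl
  rw [h1, sum_split v (fun u => x u * M.mulVec (ext0 v z) u), hxv, one_mul] at hdot
  have h2 : ∑ u : {w : V // w ≠ v}, x u.val * M.mulVec (ext0 v z) u.val = 0 :=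
    Finset.sum_eq_zero fun u _ => by rw [mulVec_ext0_ne M v z hz u.prop, mul_zero]
  rw [h2, add_zero] at hdot
  exact hdot

/-- Key lemma A: if the kernel contains a vector not vanishing at `v`, deleting `v`
decreases the nullity by exactly one. -/
lemma nuM_eq_succ (M : Matrix V V F2) (hsym : Mᵀ = M) (v : V)
    (x : V → F2) (hx : M.mulVec x = 0) (hxv : x v = 1) :
    nuM M = nuM (M.submatrix (Subtype.val : {w : V // w ≠ v} → V) Subtype.val) + 1 := by
  classical
  set M' := M.submatrix (Subtype.val : {w : V // w ≠ v} → V) Subtype.val with hM'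
  let ψ₀ : (V → F2) →ₗ[F2] ({w : V // w ≠ v} → F2) :=
    { toFun := fun y w => y w.val - y v * x w.val
      map_add' := by intro a b; funext w; simp only [Pi.add_apply]; ring
      map_smul' := by
        intro c a; funext w
        simp only [Pi.smul_apply, smul_eq_mul, RingHom.id_apply]; ring }
  have hmem : ∀ y : LinearMap.ker M.mulVecLin,
      ψ₀ ((LinearMap.ker M.mulVecLin).subtype y) ∈ LinearMap.ker M'.mulVecLin := by
    rintro ⟨y, hy⟩
    rw [LinearMap.mem_ker] at hy ⊢
    have hy' : M.mulVec y = 0 := hy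
    set yt : V → F2 := fun u => y u - y v * x u with hyt
    have hytker : M.mulVec yt = 0 := by
      have : yt = y - (y v) • x := by funext u; simp [hyt, smul_eq_mul]
      rw [this, Matrix.mulVec_sub, Matrix.mulVec_smul, hy', hx, smul_zero, sub_zero]
    have hytv : yt v = 0 := by simp [hyt, hxv]
    have := restrict_ker M v yt hytker hytv
    exact this
  let ψ : LinearMap.ker M.mulVecLin →ₗ[F2] LinearMap.ker M'.mulVecLin :=
    LinearMap.codRestrict _ (ψ₀ ∘ₗ (LinearMap.ker M.mulVecLin).subtype) hmem
  have hxmem : x ∈ LinearMap.ker M.mulVecLin := hx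
  have hsurj : LinearMap.range ψ = ⊤ := by
    rw [LinearMap.range_eq_top]
    rintro ⟨z, hz⟩
    rw [LinearMap.mem_ker] at hz
    have hz' : M'.mulVec z = 0 := hz
    have hyk : M.mulVec (ext0 v z) = 0 := by
      funext u
      simp only [Pi.zero_apply]
      by_cases hu : u = v
      · rw [hu]; exact mulVec_ext0_self M hsym v z hz' x hx hxv
      · exact mulVec_ext0_ne M v z hz' hu
    refine ⟨⟨ext0 v z, hyk⟩, ?_⟩
    apply Subtype.ext
    funext w
    show ext0 v z w.val - ext0 v z v * x w.val = z w
    rw [ext0_apply_self, zero_mul, sub_zero, ext0_apply_ne v z w.prop]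
  have hker : LinearMap.ker ψ = Submodule.span F2 {(⟨x, hxmem⟩ : LinearMap.ker M.mulVecLin)} := by
    ext ⟨y, hy⟩
    rw [LinearMap.mem_ker, Submodule.mem_span_singleton]
    constructor
    · intro h
      refine ⟨y v, ?_⟩
      apply Subtype.ext
      show y v • x = y
      funext u
      by_cases hu : u = v
      · subst hu; simp [hxv]
      · have := congrFun (congrArg Subtype.val h) ⟨u, hu⟩
        have h2 : y u - y v * x u = 0 := this
        have : y u = y v * x u := by linear_combination h2
        simp [this, smul_eq_mul]
    · rintro ⟨c, hc⟩
      have hc' : c • x = y := congrArg Subtype.val hc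
      apply Subtype.ext
      funext w
      show y w.val - y v * x w.val = 0
      rw [← hc']
      simp only [Pi.smul_apply, smul_eq_mul, hxv, mul_one]
      ring
  have hrank := LinearMap.finrank_range_add_finrank_ker ψ
  rw [hsurj, hker] at hrank
  have h1 : Module.finrank F2 (⊤ : Submodule F2 (LinearMap.ker M'.mulVecLin))
      = nuM M' := finrank_top _ _
  have h2 : Module.finrank F2
      (Submodule.span F2 {(⟨x, hxmem⟩ : LinearMap.ker M.mulVecLin)}) = 1 := by
    apply finrank_span_singleton
    intro h
    have h2 : x = 0 := by
      have := congrArg Subtype.val h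
      simpa using this
    exact one_ne_zero ((congrFun h2 v).symm.trans hxv).symm
  rw [h1, h2] at hrank
  exact hrank.symm

/-- Key lemma B: if the matrix is invertible (trivial kernel), some vertex can be deleted
keeping the kernel trivial. -/
lemma exists_good_vertex (M : Matrix V V F2) (hsym : Mᵀ = M) (hdiag : ∀ i, M i i = 1)
    [Nonempty V] (hker : LinearMap.ker M.mulVecLin = ⊥) :
    ∃ v : V, LinearMap.ker
      (M.submatrix (fun w : {w : V // w ≠ v} => (w : V))
        (fun w : {w : V // w ≠ v} => (w : V))).mulVecLin = ⊥ := by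
  classical
  by_contra hcon
  push_neg at hcon
  have hinj : Function.Injective M.mulVecLin := LinearMap.ker_eq_bot.mp hker
  -- choose nonzero kernel vectors of each deleted matrix
  have hz : ∀ v : V, ∃ z : {w : V // w ≠ v} → F2,
      (M.submatrix (fun w : {w : V // w ≠ v} => (w : V))
        (fun w : {w : V // w ≠ v} => (w : V))).mulVec z = 0 ∧ z ≠ 0 := by
    intro v
    obtain ⟨z, hz1, hz2⟩ := Submodule.exists_mem_ne_zero_of_ne_bot (hcon v)
    exact ⟨z, hz1, hz2⟩
  choose z hz1 hz2 using hz
  set Y : V → V → F2 := fun v => ext0 v (z v) with hY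
  have hYne : ∀ v, Y v ≠ 0 := by
    intro v h
    apply hz2 v
    funext w
    have := congrFun h w.val
    rw [hY] at this
    simpa [ext0_apply_ne v (z v) w.prop] using this
  have hYsingle : ∀ v, M.mulVec (Y v) = Pi.single v 1 := by
    intro v
    set c := M.mulVec (Y v) v with hc
    have hoff : ∀ u, u ≠ v → M.mulVec (Y v) u = 0 := fun u hu =>
      mulVec_ext0_ne M v (z v) (hz1 v) hu
    have hform : M.mulVec (Y v) = Pi.single v c := by
      funext u
      by_cases hu : u = v
      · subst hu; rw [Pi.single_eq_same]
      · rw [hoff u hu, Pi.single_eq_of_ne hu]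
    have hcne : c ≠ 0 := by
      intro h0
      rw [h0] at hform
      have : M.mulVec (Y v) = M.mulVec 0 := by
        rw [hform, Matrix.mulVec_zero]; funext u; simp
      exact hYne v (hinj this)
    rw [hform, ne_zero_eq_one hcne]
  have hYv : ∀ v, Y v v = 0 := fun v => ext0_apply_self v (z v)
  -- symmetry of Y
  have hYsym : ∀ u w, Y u w = Y w u := by
    intro u w
    have h1 : Y u w = Pi.single w 1 ⬝ᵥ Y u := by
      simp [dotProduct, Pi.single_apply, Finset.sum_ite_eq, eq_comm]
    have h2 : Pi.single w 1 ⬝ᵥ Y u = M.mulVec (Y w) ⬝ᵥ Y u := by rw [hYsingle w]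
    have h3 : M.mulVec (Y w) ⬝ᵥ Y u = Y w ⬝ᵥ M.mulVec (Y u) := by
      rw [Matrix.dotProduct_mulVec, ← Matrix.mulVec_transpose, hsym]
    have h4 : Y w ⬝ᵥ M.mulVec (Y u) = Y w u := by
      rw [hYsingle u]
      simp [dotProduct, Pi.single_apply, Finset.sum_ite_eq', eq_comm]
    rw [h1, h2, h3, h4]
  -- derive the contradiction
  obtain ⟨i⟩ := ‹Nonempty V›
  set x : V → F2 := fun u => M i u with hxdef
  set y : V → F2 := fun w => ∑ u, x u * Y u w with hydef
  have hMy : M.mulVec y = M.mulVec (Pi.single i 1) := by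
    have h1 : y = ∑ u, x u • Y u := by
      funext w; rw [hydef, Finset.sum_apply]; rfl
    have h2 : M.mulVec (∑ u, x u • Y u) = ∑ u, x u • M.mulVec (Y u) := by
      simp only [← Matrix.mulVecLin_apply, map_sum, LinearMap.map_smul]
    rw [h1, h2]
    funext w
    have h3 : (∑ u, x u • M.mulVec (Y u)) w = ∑ u, x u * (Pi.single u 1 : V → F2) w := by
      rw [Finset.sum_apply]
      exact Finset.sum_congr rfl fun u _ => by rw [hYsingle u]; rfl
    have h4 : ∑ u, x u * (Pi.single u 1 : V → F2) w = x w := by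
      simp [Pi.single_apply]
    have h5 : M.mulVec (Pi.single i 1) w = M w i := by
      simp [Matrix.mulVec, dotProduct, Pi.single_apply]
    have h6 : x w = M w i := by
      have h7 : Mᵀ w i = M w i := by rw [hsym]
      rw [hxdef]
      show M i w = M w i
      rw [← h7, Matrix.transpose_apply]
    rw [h3, h4, h5, h6]
  have hy' : y = Pi.single i 1 := by
    apply hinj
    rw [Matrix.mulVecLin_apply, Matrix.mulVecLin_apply]
    exact hMy
  have hs1 : ∑ w, x w * y w = 1 := by
    rw [hy']
    have : ∑ w, x w * (Pi.single i 1 : V → F2) w = x i := by simp [Pi.single_apply]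
    rw [this, hxdef]
    exact hdiag i
  have hs2 : ∑ w, x w * y w = 0 := by
    have hB : ∀ u w, (Matrix.of fun u w => Y u w) u w = (Matrix.of fun u w => Y u w) w u :=
      fun u w => hYsym u w
    have heq : ∑ w, x w * y w = x ⬝ᵥ (Matrix.of fun u w => Y u w).mulVec x := by
      have hl : ∑ w, x w * y w = ∑ w, ∑ u, x w * (x u * Y u w) := by
        refine Finset.sum_congr rfl fun w _ => ?_
        rw [hydef, Finset.mul_sum]
      have hr : x ⬝ᵥ (Matrix.of fun u w => Y u w).mulVec x
          = ∑ u, ∑ w, x u * (Y u w * x w) := by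
        refine Finset.sum_congr rfl fun u _ => ?_
        show x u * ∑ w, Y u w * x w = _
        rw [Finset.mul_sum]
      rw [hl, hr, Finset.sum_comm]
      exact Finset.sum_congr rfl fun u _ => Finset.sum_congr rfl fun w _ => by ring
    rw [heq, quadform _ hB x]
    refine Finset.sum_eq_zero fun u _ => ?_
    show Y u u * x u = 0
    rw [hYv u, zero_mul]
  rw [hs1] at hs2
  exact one_ne_zero hs2

lemma nuM_of_isEmpty {V : Type*} [Fintype V] [IsEmpty V] (M : Matrix V V F2) : nuM M = 0 := by
  have h1 : Module.finrank F2 (V → F2) = 0 := by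
    rw [Module.finrank_fintype_fun_eq_card]
    simp
  have h2 := Submodule.finrank_le (LinearMap.ker M.mulVecLin)
  rw [h1] at h2
  exact Nat.le_zero.mp h2

lemma nuM_eq_zero_iff (M : Matrix V V F2) : nuM M = 0 ↔ LinearMap.ker M.mulVecLin = ⊥ := by
  rw [nuM, Submodule.finrank_eq_zero]

/-- choose a vertex whose deletion decreases the nullity exactly by one (or keeps it 0). -/
lemma exists_vertex_step [Nonempty V] (M : Matrix V V F2) (hsym : Mᵀ = M)
    (hdiag : ∀ i, M i i = 1) :
    ∃ v : V, nuM (M.submatrix (fun w : {w : V // w ≠ v} => (w : V))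
      (fun w : {w : V // w ≠ v} => (w : V))) = nuM M - 1 := by
  classical
  by_cases h : nuM M = 0
  · obtain ⟨v, hv⟩ := exists_good_vertex M hsym hdiag ((nuM_eq_zero_iff M).mp h)
    refine ⟨v, ?_⟩
    rw [h]
    have : nuM (M.submatrix (fun w : {w : V // w ≠ v} => (w : V))
        (fun w : {w : V // w ≠ v} => (w : V))) = 0 := (nuM_eq_zero_iff _).mpr hv
    omega
  · have hne : LinearMap.ker M.mulVecLin ≠ ⊥ := fun hb => h ((nuM_eq_zero_iff M).mpr hb)
    obtain ⟨x, hx1, hx2⟩ := Submodule.exists_mem_ne_zero_of_ne_bot hne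
    obtain ⟨v, hv⟩ := Function.ne_iff.mp hx2
    have hxv : x v = 1 := ne_zero_eq_one (by simpa using hv)
    have hxk : M.mulVec x = 0 := hx1
    have h3 := nuM_eq_succ M hsym v x hxk hxv
    have h4 : nuM (M.submatrix (fun w : {w : V // w ≠ v} => (w : V))
        (fun w : {w : V // w ≠ v} => (w : V)))
        = nuM (M.submatrix (Subtype.val : {w : V // w ≠ v} → V) Subtype.val) := rfl
    exact ⟨v, by rw [h4]; omega⟩

universe u

lemma auxM (n : ℕ) : ∀ (V : Type u) [Fintype V] (M : Matrix V V F2),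
    Fintype.card V = n → Mᵀ = M → (∀ i, M i i = 1) →
    ∃ e : Fin (Fintype.card V) ≃ V, ∀ k : ℕ,
      (k < nuM M → nuM (M.submatrix
        (fun x : {x : V | k ≤ ((e.symm x : Fin (Fintype.card V)) : ℕ)} => (x : V))
        (fun x : {x : V | k ≤ ((e.symm x : Fin (Fintype.card V)) : ℕ)} => (x : V)))
          = nuM M - k) ∧
      (nuM M ≤ k → nuM (M.submatrix
        (fun x : {x : V | k ≤ ((e.symm x : Fin (Fintype.card V)) : ℕ)} => (x : V))
        (fun x : {x : V | k ≤ ((e.symm x : Fin (Fintype.card V)) : ℕ)} => (x : V))) = 0) := by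
  induction n with
  | zero =>
    intro V _ M hcard hsym hdiag
    haveI hE : IsEmpty V := Fintype.card_eq_zero_iff.mp hcard
    have hM0 : nuM M = 0 := nuM_of_isEmpty M
    refine ⟨(finCongr hcard).trans (Equiv.equivOfIsEmpty (Fin 0) V), fun k => ⟨?_, ?_⟩⟩
    · intro hk; omega
    · intro _
      haveI : IsEmpty {x : V | k ≤ (((((finCongr hcard).trans
          (Equiv.equivOfIsEmpty (Fin 0) V)).symm x : Fin (Fintype.card V))) : ℕ)} :=
        ⟨fun x => IsEmpty.false x.val⟩
      exact nuM_of_isEmpty _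
  | succ n ih =>
    intro V _ M hcard hsym hdiag
    haveI : Nonempty V := Fintype.card_pos_iff.mp (by omega)
    obtain ⟨v, hv⟩ := exists_vertex_step M hsym hdiag
    set W := {w : V // w ≠ v} with hW
    set M' : Matrix W W F2 := M.submatrix (fun w : W => (w : V)) (fun w : W => (w : V)) with hM'
    have hsym' : M'ᵀ = M' := by
      ext i j
      show M j.val i.val = M i.val j.val
      conv_lhs => rw [← hsym]
      rfl
    have hdiag' : ∀ i : W, M' i i = 1 := fun i => hdiag i.val
    have hcardW : Fintype.card W = n := by
      have h1 := Fintype.card_congr (Equiv.optionSubtypeNe v)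
      rw [Fintype.card_option] at h1
      have h2 : Fintype.card W = Fintype.card {b : V // b ≠ v} :=
        Fintype.card_congr (Equiv.refl _)
      omega
    obtain ⟨e', he'⟩ := ih W M' hcardW hsym' hdiag'
    set e : Fin (Fintype.card V) ≃ V :=
      (finCongr hcard).trans ((finSuccEquiv n).trans
        ((((finCongr hcardW.symm).trans e').optionCongr).trans (Equiv.optionSubtypeNe v)))
      with he_def
    have hv0 : ((e.symm v : Fin (Fintype.card V)) : ℕ) = 0 := by
      simp only [he_def, Equiv.symm_trans_apply]
      rw [Equiv.optionSubtypeNe_symm_self]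
      simp [← Equiv.optionCongr_symm]
    have hne : ∀ (x : V) (hx : x ≠ v),
        ((e.symm x : Fin (Fintype.card V)) : ℕ)
          = ((e'.symm ⟨x, hx⟩ : Fin (Fintype.card W)) : ℕ) + 1 := by
      intro x hx
      simp only [he_def, Equiv.symm_trans_apply]
      rw [Equiv.optionSubtypeNe_symm_of_ne hx]
      simp [← Equiv.optionCongr_symm]
    refine ⟨e, fun k => ?_⟩
    match k with
    | 0 =>
      set S := {x : V | 0 ≤ ((e.symm x : Fin (Fintype.card V)) : ℕ)} with hS
      let eS : S ≃ V :=
        { toFun := fun a => a.val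
          invFun := fun x => ⟨x, Nat.zero_le _⟩
          left_inv := fun a => Subtype.ext rfl
          right_inv := fun x => rfl }
      have hsub : M.submatrix (fun x : S => (x : V)) (fun x : S => (x : V))
          = M.submatrix eS eS := rfl
      have hnu : nuM (M.submatrix (fun x : S => (x : V)) (fun x : S => (x : V))) = nuM M := by
        rw [hsub]; exact nuM_reindex eS M
      exact ⟨fun _ => by rw [hnu]; omega, fun hk => by rw [hnu]; omega⟩
    | (k + 1) =>
      set S := {x : V | k + 1 ≤ ((e.symm x : Fin (Fintype.card V)) : ℕ)} with hS
      set T := {x : W | k ≤ ((e'.symm x : Fin (Fintype.card W)) : ℕ)} with hT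
      have hmemS : ∀ x : V, x ∈ S ↔ k + 1 ≤ ((e.symm x : Fin (Fintype.card V)) : ℕ) :=
        fun x => Iff.rfl
      have hnev : ∀ x : V, x ∈ S → x ≠ v := by
        intro x hx hxv
        rw [hmemS] at hx
        rw [hxv, hv0] at hx
        omega
      let φ : T ≃ S :=
        { toFun := fun y => ⟨y.val.val, by
            show k + 1 ≤ _
            rw [hne y.val.val y.val.prop]
            have h9 : k ≤ ((e'.symm ⟨y.val.val, y.val.prop⟩ : Fin (Fintype.card W)) : ℕ) :=
              y.prop
            omega⟩
          invFun := fun x => ⟨⟨x.val, hnev x.val x.prop⟩, by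
            show k ≤ _
            have hx := x.prop
            rw [hmemS, hne x.val (hnev x.val x.prop)] at hx
            omega⟩
          left_inv := fun y => Subtype.ext (Subtype.ext rfl)
          right_inv := fun x => Subtype.ext rfl }
      have hsub : M.submatrix (fun x : S => (x : V)) (fun x : S => (x : V))
          = (M'.submatrix (fun x : T => (x : W)) (fun x : T => (x : W))).submatrix φ.symm φ.symm :=
        rfl
      have hnu : nuM (M.submatrix (fun x : S => (x : V)) (fun x : S => (x : V)))
          = nuM (M'.submatrix (fun x : T => (x : W)) (fun x : T => (x : W))) := by
        rw [hsub]; exact nuM_reindex φ.symm _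
      constructor
      · intro hk
        have hk' : k < nuM M' := by omega
        have := (he' k).1 hk'
        rw [hnu, this]
        omega
      · intro hk
        have hk' : nuM M' ≤ k := by omega
        have := (he' k).2 hk'
        rw [hnu, this]

end NuAux

section Glue

open NuAux

variable {V : Type*} [Fintype V]

lemma closedAdj_transpose (G : SimpleGraph V) : (closedAdj G)ᵀ = closedAdj G := by
  ext i j
  simp only [closedAdj, Matrix.transpose_apply, Matrix.of_apply]
  have h : (j = i ∨ G.Adj j i) ↔ (i = j ∨ G.Adj i j) := by
    rw [eq_comm, G.adj_comm]
  exact if_congr h rfl rfl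

lemma closedAdj_diag (G : SimpleGraph V) (i : V) : closedAdj G i i = 1 := by
  simp [closedAdj]

lemma closedAdj_induce_s13 (G : SimpleGraph V) (S : Set V) :
    closedAdj (G.induce S)
      = (closedAdj G).submatrix (fun x : S => (x : V)) (fun x : S => (x : V)) := by
  ext i j
  simp only [closedAdj, Matrix.of_apply, Matrix.submatrix_apply]
  have h : (i = j ∨ (G.induce S).Adj i j) ↔ ((i : V) = (j : V) ∨ G.Adj (i : V) (j : V)) :=
    or_congr Subtype.coe_inj.symm Iff.rfl
  simp only [h]

end Glue

theorem exists_deletion_sequence {V : Type*} [Fintype V] (G : SimpleGraph V) :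
    ∃ e : Fin (Fintype.card V) ≃ V, ∀ k : ℕ,
      (k < nu G →
        nu (G.induce {x : V | k ≤ ((e.symm x : Fin (Fintype.card V)) : ℕ)}) = nu G - k) ∧
      (nu G ≤ k →
        nu (G.induce {x : V | k ≤ ((e.symm x : Fin (Fintype.card V)) : ℕ)}) = 0) := by
  classical
  obtain ⟨e, he⟩ := NuAux.auxM (Fintype.card V) V (closedAdj G) rfl
    (closedAdj_transpose G) (closedAdj_diag G)
  have h2 : ∀ k : ℕ, closedAdj (G.induce {x : V | k ≤ ((e.symm x : Fin (Fintype.card V)) : ℕ)})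
      = (closedAdj G).submatrix
        (fun x : {x : V | k ≤ ((e.symm x : Fin (Fintype.card V)) : ℕ)} => (x : V))
        (fun x : {x : V | k ≤ ((e.symm x : Fin (Fintype.card V)) : ℕ)} => (x : V)) := by
    intro k
    ext i j
    simp only [closedAdj, Matrix.of_apply, Matrix.submatrix_apply]
    have h : (i = j ∨ (G.induce {x : V |
        k ≤ ((e.symm x : Fin (Fintype.card V)) : ℕ)}).Adj i j)
        ↔ ((i : V) = (j : V) ∨ G.Adj (i : V) (j : V)) :=
      or_congr Subtype.coe_inj.symm Iff.rfl
    simp only [h]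
  refine ⟨e, fun k => ⟨fun hk => ?_, fun hk => ?_⟩⟩
  · have h1 := (he k).1 hk
    show NuAux.nuM (closedAdj
      (G.induce {x : V | k ≤ ((e.symm x : Fin (Fintype.card V)) : ℕ)}))
        = NuAux.nuM (closedAdj G) - k
    rw [h2 k]
    exact h1
  · have h1 := (he k).2 hk
    show NuAux.nuM (closedAdj
      (G.induce {x : V | k ≤ ((e.symm x : Fin (Fintype.card V)) : ℕ)})) = 0
    rw [h2 k]
    exact h1
end
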